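/- If S is an admissible pinnacle set of B_{2k+1} that is not an admissible pinnacle set of D_{2k+1}, then |S| = k. -/

import Mathlib

/-- The pinnacle set of a word `w : Fin n → ℤ`: values `w i` (for `0 < i < n-1`)
strictly larger than both neighbors. -/
def PinSet (n : ℕ) (w : Fin n → ℤ) : Set ℤ :=
  {x | ∃ (i : ℕ) (h0 : 0 < i) (h2 : i + 1 < n),
    w ⟨i, by omega⟩ = x ∧ w ⟨i - 1, by omega⟩ < w ⟨i, by omega⟩ ∧
      w ⟨i + 1, h2⟩ < w ⟨i, by omega⟩}

/-- `w : Fin n → ℤ` is the one-line notation of a signed permutation of rank `n`: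
the absolute values of its entries are distinct elements of `{1,...,n}`
(hence a bijection onto `{1,...,n}`). -/
def IsSignedPerm (n : ℕ) (w : Fin n → ℤ) : Prop :=
  (∀ i, 1 ≤ |w i| ∧ |w i| ≤ (n : ℤ)) ∧ Function.Injective fun i => |w i|

/-- `S` is an admissible pinnacle set of the hyperoctahedral group `B_n`. -/
def APSB (n : ℕ) (S : Finset ℤ) : Prop :=
  ∃ w : Fin n → ℤ, IsSignedPerm n w ∧ PinSet n w = ↑S

/-- `S` is an admissible pinnacle set of the type `D` group `D_n`
(signed permutations with an even number of negative one-line entries). -/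
def APSD (n : ℕ) (S : Finset ℤ) : Prop :=
  ∃ w : Fin n → ℤ, IsSignedPerm n w ∧
    Even (Finset.univ.filter fun i => w i < 0).card ∧ PinSet n w = ↑S

/-- `S` is an admissible pinnacle set of the symmetric group `S_n`
(an unsigned permutation is a signed permutation with all entries positive). -/
def APSA (n : ℕ) (S : Finset ℤ) : Prop :=
  ∃ w : Fin n → ℤ, IsSignedPerm n w ∧ (∀ i, 0 < w i) ∧ PinSet n w = ↑S

/-- `T` is an admissible pinnacle set of the totally ordered finite set `X ⊆ ℤ`:
it is the pinnacle set of some arrangement of the elements of `X`. -/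
def APSOn (X : Finset ℤ) (T : Finset ℤ) : Prop :=
  ∃ w : Fin X.card → ℤ, Function.Injective w ∧ (∀ i, w i ∈ X) ∧
    PinSet X.card w = ↑T

lemma mem_PinSet_iff {n : ℕ} {w : Fin n → ℤ} {W : ℕ → ℤ}
    (hW : ∀ i (h : i < n), W i = w ⟨i, h⟩) (x : ℤ) :
    x ∈ PinSet n w ↔
      ∃ i, 0 < i ∧ i + 1 < n ∧ W i = x ∧ W (i-1) < W i ∧ W (i+1) < W i := by
  constructor
  · rintro ⟨i, h0, h2, he, hl, hr⟩
    refine ⟨i, h0, h2, ?_, ?_, ?_⟩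
    · rw [hW i (by omega)]; exact he
    · rw [hW (i-1) (by omega), hW i (by omega)]; exact hl
    · rw [hW (i+1) (by omega), hW i (by omega)]; exact hr
  · rintro ⟨i, h0, h2, he, hl, hr⟩
    refine ⟨i, h0, h2, ?_, ?_, ?_⟩
    · rw [← hW i (by omega)]; exact he
    · rw [← hW (i-1) (by omega), ← hW i (by omega)]; exact hl
    · rw [← hW (i+1) (by omega), ← hW i (by omega)]; exact hr


lemma countP_gt_sorted (l : List ℤ) (hl : l.Pairwise (· < ·)) (i : ℕ) (hi : i < l.length) (c : ℤ)
    (hc : l[i] ≤ c) : l.countP (fun x => decide (c < x)) ≤ l.length - i - 1 := by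
  have h := List.take_append_drop (i+1) l
  have h2 : l.countP (fun x => decide (c < x)) =
      (l.take (i+1)).countP (fun x => decide (c < x))
        + (l.drop (i+1)).countP (fun x => decide (c < x)) := by
    conv_lhs => rw [← h]
    rw [List.countP_append]
  have h3 : (l.take (i+1)).countP (fun x => decide (c < x)) = 0 := by
    rw [List.countP_eq_zero]
    intro a ha
    simp only [decide_eq_true_eq]
    rw [List.mem_iff_getElem] at ha
    obtain ⟨j, hj, rfl⟩ := ha
    have hj' : j < i + 1 := by
      have : (l.take (i+1)).length = min (i+1) l.length := List.length_take; omega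
    rw [List.getElem_take]
    have : l[j] ≤ l[i] := by
      rcases Nat.lt_or_ge j i with h | h
      · exact le_of_lt (List.SortedLT.strictMono_get (List.Pairwise.sortedLT hl) (show (⟨j, by omega⟩ : Fin _) < ⟨i, hi⟩ from h))
      · have : j = i := by omega
        subst this; exact le_refl _
    omega
  have h4 : (l.drop (i+1)).countP (fun x => decide (c < x)) ≤ (l.drop (i+1)).length :=
    List.countP_le_length
  rw [List.length_drop] at h4
  omega

lemma countP_le_sorted (l : List ℤ) (hl : l.Pairwise (· < ·)) (i : ℕ) (hi : i < l.length) (c : ℤ)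
    (hc : c = l[i]) : l.countP (fun x => decide (x ≤ c)) = i + 1 := by
  have h := List.take_append_drop (i+1) l
  have h2 : l.countP (fun x => decide (x ≤ c)) =
      (l.take (i+1)).countP (fun x => decide (x ≤ c))
        + (l.drop (i+1)).countP (fun x => decide (x ≤ c)) := by
    conv_lhs => rw [← h]
    rw [List.countP_append]
  have h3 : (l.take (i+1)).countP (fun x => decide (x ≤ c)) = (i+1) := by
    rw [List.countP_eq_length.2, List.length_take]
    · omega
    · intro a ha
      simp only [decide_eq_true_eq]
      rw [List.mem_iff_getElem] at ha
      obtain ⟨j, hj, rfl⟩ := ha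
      have hj' : j < i + 1 := by have : (l.take (i+1)).length = min (i+1) l.length := List.length_take; omega
      rw [List.getElem_take, hc]
      rcases Nat.lt_or_ge j i with h | h
      · exact le_of_lt (List.SortedLT.strictMono_get (List.Pairwise.sortedLT hl) (show (⟨j, by omega⟩ : Fin _) < ⟨i, hi⟩ from h))
      · have : j = i := by omega
        subst this; exact le_refl _
  have h4 : (l.drop (i+1)).countP (fun x => decide (x ≤ c)) = 0 := by
    rw [List.countP_eq_zero]
    intro a ha
    simp only [decide_eq_true_eq, not_le]
    rw [List.mem_iff_getElem] at ha
    obtain ⟨j, hj, rfl⟩ := ha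
    rw [List.getElem_drop, hc]
    exact List.SortedLT.strictMono_get (List.Pairwise.sortedLT hl) (show (⟨i, hi⟩ : Fin _) < ⟨i+1+j, by
      rw [List.length_drop] at hj; omega⟩ from Fin.mk_lt_mk.mpr (by omega))
  omega

lemma filter_card_eq_countP (s : Finset ℤ) (p : ℤ → Prop) [DecidablePred p] :
    (s.filter p).card = (s.sort (· ≤ ·)).countP (fun x => decide (p x)) := by
  have h1 := Finset.sort_perm_toList s (· ≤ ·)
  rw [h1.countP_eq]
  rw [← Multiset.coe_countP, Finset.coe_toList]
  rw [Multiset.countP_eq_card_filter]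
  rfl

lemma sorted_getD_gt (s : Finset ℤ) (c : ℤ) (t i : ℕ)
    (hcard : t ≤ (s.filter (fun x => c < x)).card) (hi : i < s.card) (hit : s.card ≤ i + t) :
    c < (s.sort (· ≤ ·)).getD i 0 := by
  have hlen : (s.sort (· ≤ ·)).length = s.card := Finset.length_sort _
  rw [List.getD_eq_getElem _ _ (by omega)]
  by_contra h
  push_neg at h
  have h2 := countP_gt_sorted _ (Finset.sortedLT_sort s).pairwise i (by omega) c h
  have h3 := filter_card_eq_countP s (fun x => c < x)
  omega


lemma witness_card_le {n : ℕ} {w : Fin n → ℤ} {S : Finset ℤ}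
    (hw : IsSignedPerm n w) (hpin : PinSet n w = ↑S)
    {k : ℕ} (hn : n = 2 * k + 1) : S.card ≤ k := by
  classical
  set W : ℕ → ℤ := fun r => if h : r < n then w ⟨r, h⟩ else 0 with hWdef
  have hW : ∀ i (h : i < n), W i = w ⟨i, h⟩ := fun i h => dif_pos h
  have hmem : ∀ x : ℤ, x ∈ S ↔
      ∃ i, 0 < i ∧ i + 1 < n ∧ W i = x ∧ W (i-1) < W i ∧ W (i+1) < W i := by
    intro x
    rw [← mem_PinSet_iff hW, hpin]; simp
  have hex : ∀ s : ℤ, ∃ i, s ∈ S →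
      0 < i ∧ i + 1 < n ∧ W i = s ∧ W (i-1) < W i ∧ W (i+1) < W i := by
    intro s
    by_cases hs : s ∈ S
    · exact ((hmem s).1 hs).imp (fun i h _ => h)
    · exact ⟨1, fun h => absurd h hs⟩
  choose p hp using hex
  have hnonadj : ∀ s ∈ S, ∀ t ∈ S, p t ≠ p s + 1 := by
    intro s hs t ht heq
    obtain ⟨hs0, hs2, hse, hsl, hsr⟩ := hp s hs
    obtain ⟨ht0, ht2, hte, htl, htr⟩ := hp t ht
    have h1 : p t - 1 = p s := by omega
    rw [h1, heq] at htl
    exact absurd (htl.trans hsr) (lt_irrefl _)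
  have hpe : ∀ s ∈ S, W (p s) = s := fun s hs => (hp s hs).2.2.1
  have := Finset.card_le_card_of_injOn (f := fun s => (p s - 1) / 2) (t := Finset.range k) (s := S) ?_ ?_
  · simpa using this
  · intro s hs
    obtain ⟨hs0, hs2, _⟩ := hp s hs
    rw [Finset.mem_coe, Finset.mem_range]
    show (p s - 1) / 2 < k
    omega
  · intro s hs t ht heq
    have heq' : (p s - 1) / 2 = (p t - 1) / 2 := heq
    by_contra hne
    have hpne : p s ≠ p t := by
      intro h
      exact hne (by rw [← hpe s hs, ← hpe t ht, h])
    obtain ⟨hs0, hs2, _⟩ := hp s hs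
    obtain ⟨ht0, ht2, _⟩ := hp t ht
    have : p t = p s + 1 ∨ p s = p t + 1 := by omega
    rcases this with h | h
    · exact hnonadj s hs t ht h
    · exact hnonadj t ht s hs h


lemma witness_counting {n : ℕ} {w : Fin n → ℤ} {S : Finset ℤ}
    (hw : IsSignedPerm n w) (hpin : PinSet n w = ↑S)
    {s : ℤ} (hs : s ∈ S) (hneg : s < 0) :
    (S.filter (· ≤ s)).card + 1 ≤
      ((Finset.Icc (1:ℤ) (n:ℤ) \ S.image (fun x => |x|)).filter (fun b => -s < b)).card := by
  classical
  set W : ℕ → ℤ := fun r => if h : r < n then w ⟨r, h⟩ else 0 with hWdef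
  have hW : ∀ i (h : i < n), W i = w ⟨i, h⟩ := fun i h => dif_pos h
  have hWbd : ∀ r, r < n → 1 ≤ |W r| ∧ |W r| ≤ (n:ℤ) := by
    intro r hr; rw [hW r hr]; exact hw.1 _
  have hWinj : ∀ r r', r < n → r' < n → |W r| = |W r'| → r = r' := by
    intro r r' hr hr' h
    rw [hW r hr, hW r' hr'] at h
    have := hw.2 (show (fun i => |w i|) ⟨r, hr⟩ = (fun i => |w i|) ⟨r', hr'⟩ from h)
    simpa using congrArg Fin.val this
  have hmem : ∀ x : ℤ, x ∈ S ↔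
      ∃ i, 0 < i ∧ i + 1 < n ∧ W i = x ∧ W (i-1) < W i ∧ W (i+1) < W i := by
    intro x; rw [← mem_PinSet_iff hW, hpin]; simp
  have hex : ∀ s : ℤ, ∃ i, s ∈ S →
      0 < i ∧ i + 1 < n ∧ W i = s ∧ W (i-1) < W i ∧ W (i+1) < W i := by
    intro s
    by_cases hs : s ∈ S
    · exact ((hmem s).1 hs).imp (fun i h _ => h)
    · exact ⟨1, fun h => absurd h hs⟩
  choose p hp using hex
  have hnonadj : ∀ a ∈ S, ∀ b ∈ S, p b ≠ p a + 1 := by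
    intro a ha b hb heq
    obtain ⟨hs0, hs2, hse, hsl, hsr⟩ := hp a ha
    obtain ⟨ht0, ht2, hte, htl, htr⟩ := hp b hb
    have h1 : p b - 1 = p a := by omega
    rw [h1, heq] at htl
    exact absurd (htl.trans hsr) (lt_irrefl _)
  have hpe : ∀ a ∈ S, W (p a) = a := fun a ha => (hp a ha).2.2.1
  have hpinj : ∀ a ∈ S, ∀ b ∈ S, p a = p b → a = b := by
    intro a ha b hb h
    rw [← hpe a ha, ← hpe b hb, h]
  -- bounds on s itself
  have hsbd : 1 ≤ -s := by
    have := hWbd (p s) (by have := hp s hs; omega)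
    rw [hpe s hs] at this
    rw [abs_of_neg hneg] at this; omega
  set Psmall := S.filter (fun t => t ≤ s) with hPsmall
  set Pbig := S.filter (fun t => s < t ∧ -s ≤ t) with hPbig
  set A := Finset.Icc (-s) (n:ℤ) with hA
  have hsPsmall : s ∈ Psmall := Finset.mem_filter.2 ⟨hs, le_refl _⟩
  have hqne : (Psmall.image p).Nonempty := ⟨p s, Finset.mem_image_of_mem _ hsPsmall⟩
  set q := (Psmall.image p).min' hqne with hq
  obtain ⟨t₀, ht₀mem, hqt₀⟩ := Finset.mem_image.1 ((Psmall.image p).min'_mem hqne)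
  have ht₀S : t₀ ∈ S := (Finset.mem_filter.1 ht₀mem).1
  have ht₀le : t₀ ≤ s := (Finset.mem_filter.1 ht₀mem).2
  have hqmin : ∀ t ∈ Psmall, q ≤ p t := fun t ht =>
    (Psmall.image p).min'_le _ (Finset.mem_image_of_mem _ ht)
  have hq1 : 1 ≤ q := by have := hp t₀ ht₀S; omega
  set U := ((Psmall ∪ Pbig).image p ∪ Psmall.image (fun t => p t + 1)) ∪ {q - 1} with hU
  -- membership facts
  have hUfacts : ∀ r ∈ U, r < n ∧ -s ≤ |W r| := by
    intro r hr
    rcases Finset.mem_union.1 hr with hr | hr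
    · rcases Finset.mem_union.1 hr with hr | hr
      · obtain ⟨t, ht, rfl⟩ := Finset.mem_image.1 hr
        rcases Finset.mem_union.1 ht with ht | ht
        · have htS := (Finset.mem_filter.1 ht).1
          have htle := (Finset.mem_filter.1 ht).2
          have hpt := hp t htS
          refine ⟨by omega, ?_⟩
          rw [hpe t htS]
          exact le_abs.2 (Or.inr (by linarith))
        · have htS := (Finset.mem_filter.1 ht).1
          have htbig := (Finset.mem_filter.1 ht).2
          have hpt := hp t htS
          refine ⟨by omega, ?_⟩
          rw [hpe t htS]
          exact le_abs.2 (Or.inl htbig.2)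
      · obtain ⟨t, ht, rfl⟩ := Finset.mem_image.1 hr
        have htS := (Finset.mem_filter.1 ht).1
        have htle := (Finset.mem_filter.1 ht).2
        obtain ⟨h0, h2, he, hl, hrr⟩ := hp t htS
        refine ⟨by omega, ?_⟩
        rw [he] at hrr
        exact le_abs.2 (Or.inr (by linarith))
    · rw [Finset.mem_singleton] at hr
      subst hr
      obtain ⟨h0, h2, he, hl, hrr⟩ := hp t₀ ht₀S
      have hqe : p t₀ = q := hqt₀
      rw [hqe] at he hl
      rw [he] at hl
      refine ⟨by omega, ?_⟩
      exact le_abs.2 (Or.inr (by linarith))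
  -- cardinality of U
  have hdisjP : Disjoint Psmall Pbig := by
    rw [Finset.disjoint_filter]
    intro x _ hx hx'
    exact absurd hx'.1 (not_lt.2 hx)
  have hpinjS : Set.InjOn p ↑S := fun a ha b hb h => hpinj a ha b hb h
  have c1 : ((Psmall ∪ Pbig).image p).card = Psmall.card + Pbig.card := by
    rw [Finset.card_image_of_injOn (hpinjS.mono (by
      intro x hx
      rcases Finset.mem_union.1 hx with h | h
      · exact (Finset.mem_filter.1 h).1
      · exact (Finset.mem_filter.1 h).1))]
    exact Finset.card_union_of_disjoint hdisjP
  have c2 : (Psmall.image (fun t => p t + 1)).card = Psmall.card := by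
    apply Finset.card_image_of_injOn
    intro a ha b hb h
    have h' : p a + 1 = p b + 1 := h
    exact hpinj a (Finset.mem_filter.1 ha).1 b (Finset.mem_filter.1 hb).1 (by omega)
  have d12 : Disjoint ((Psmall ∪ Pbig).image p) (Psmall.image (fun t => p t + 1)) := by
    rw [Finset.disjoint_left]
    intro r hr hr'
    obtain ⟨a, ha, hra⟩ := Finset.mem_image.1 hr
    obtain ⟨b, hb, hrb⟩ := Finset.mem_image.1 hr'
    have hrb' : p b + 1 = r := hrb
    have haS : a ∈ S := by
      rcases Finset.mem_union.1 ha with h | h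
      · exact (Finset.mem_filter.1 h).1
      · exact (Finset.mem_filter.1 h).1
    exact hnonadj b (Finset.mem_filter.1 hb).1 a haS (by omega)
  have d3 : q - 1 ∉ (Psmall ∪ Pbig).image p ∪ Psmall.image (fun t => p t + 1) := by
    intro hmem'
    rcases Finset.mem_union.1 hmem' with h | h
    · obtain ⟨a, ha, hra⟩ := Finset.mem_image.1 h
      have haS : a ∈ S := by
        rcases Finset.mem_union.1 ha with h' | h'
        · exact (Finset.mem_filter.1 h').1
        · exact (Finset.mem_filter.1 h').1
      exact hnonadj a haS t₀ ht₀S (by omega)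
    · obtain ⟨b, hb, hrb⟩ := Finset.mem_image.1 h
      have hrb' : p b + 1 = q - 1 := hrb
      have := hqmin b hb
      omega
  have hUcard : U.card = Psmall.card + Pbig.card + Psmall.card + 1 := by
    rw [hU, Finset.card_union_of_disjoint (Finset.disjoint_singleton_right.2 d3),
      Finset.card_union_of_disjoint d12, c1, c2, Finset.card_singleton]
  -- |A| ≥ |U|
  have hUA : U.card ≤ A.card := by
    apply Finset.card_le_card_of_injOn (f := fun r => |W r|)
    · intro r hr
      obtain ⟨hrn, hrs⟩ := hUfacts r hr
      simp only [hA, Finset.mem_coe, Finset.mem_Icc]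
      exact ⟨hrs, (hWbd r hrn).2⟩
    · intro r hr r' hr' h
      exact hWinj r r' (hUfacts r hr).1 (hUfacts r' hr').1 h
  -- A ∩ image ≤ Psmall + Pbig
  have himg : (A ∩ S.image (fun x => |x|)).card ≤ Psmall.card + Pbig.card := by
    calc (A ∩ S.image (fun x => |x|)).card
        ≤ ((Psmall ∪ Pbig).image (fun x => |x|)).card := by
          apply Finset.card_le_card
          intro a ha
          obtain ⟨haA, haimg⟩ := Finset.mem_inter.1 ha
          obtain ⟨t, htS, hta⟩ := Finset.mem_image.1 haimg
          rw [hA, Finset.mem_Icc] at haA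
          apply Finset.mem_image.2
          refine ⟨t, ?_, hta⟩
          rcases le_or_gt t s with h | h
          · exact Finset.mem_union_left _ (Finset.mem_filter.2 ⟨htS, h⟩)
          · refine Finset.mem_union_right _ (Finset.mem_filter.2 ⟨htS, h, ?_⟩)
            rcases le_or_gt 0 t with h0 | h0
            · rw [abs_of_nonneg h0] at hta; omega
            · rw [abs_of_neg h0] at hta; omega
      _ ≤ (Psmall ∪ Pbig).card := Finset.card_image_le
      _ ≤ Psmall.card + Pbig.card := Finset.card_union_le _ _
  -- subset into the target
  have hsub : A \ S.image (fun x => |x|) ⊆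
      (Finset.Icc (1:ℤ) (n:ℤ) \ S.image (fun x => |x|)).filter (fun b => -s < b) := by
    intro a ha
    obtain ⟨haA, haimg⟩ := Finset.mem_sdiff.1 ha
    rw [hA, Finset.mem_Icc] at haA
    have hane : a ≠ -s := by
      intro h
      apply haimg
      apply Finset.mem_image.2 ⟨s, hs, by rw [abs_of_neg hneg, h]⟩
    refine Finset.mem_filter.2 ⟨Finset.mem_sdiff.2 ⟨Finset.mem_Icc.2 ⟨by omega, haA.2⟩, haimg⟩, ?_⟩
    rcases lt_or_eq_of_le haA.1 with h | h
    · exact h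
    · exact absurd h.symm hane
  have hsdcard : A.card = (A \ S.image (fun x => |x|)).card + (A ∩ S.image (fun x => |x|)).card :=
    (Finset.card_sdiff_add_card_inter _ _).symm
  have := Finset.card_le_card hsub
  omega

def bidxD (k m i : ℕ) : ℕ := if i < 2*m then 2*k - m - i/2 else 2*k - i

noncomputable def FD (k : ℕ) (S : Finset ℤ) (fl : Bool) (i : ℕ) : ℤ :=
  if i % 2 = 1 ∧ i < 2 * S.card then (S.sort (· ≤ ·)).getD (i/2) 0
  else if fl = true ∧ i = 2*k then
    (((Finset.Icc (1:ℤ) (2*(k:ℤ)+1)) \ S.image (fun x => |x|)).sort (· ≤ ·)).getD 0 0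
  else -((((Finset.Icc (1:ℤ) (2*(k:ℤ)+1)) \ S.image (fun x => |x|)).sort (· ≤ ·)).getD (bidxD k S.card i) 0)

lemma buildD (k : ℕ) (S : Finset ℤ) (hm : S.card < k)
    (habs : ∀ s ∈ S, ∀ t ∈ S, |s| = |t| → s = t)
    (hbd : ∀ s ∈ S, 1 ≤ |s| ∧ |s| ≤ (2*(k:ℤ)+1))
    (hcnt : ∀ s ∈ S, s < 0 → (S.filter (· ≤ s)).card + 1 ≤
      ((Finset.Icc (1:ℤ) (2*(k:ℤ)+1) \ S.image (fun x => |x|)).filter (fun b => -s < b)).card) :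
    APSD (2*k+1) S := by
  classical
  set m := S.card with hmdef
  set T : List ℤ := S.sort (· ≤ ·) with hT
  set Babs : Finset ℤ := Finset.Icc (1:ℤ) (2*(k:ℤ)+1) \ S.image (fun x => |x|) with hBabs
  set Bs : List ℤ := Babs.sort (· ≤ ·) with hBs
  have hTlen : T.length = m := Finset.length_sort _
  have hIcc : (Finset.Icc (1:ℤ) (2*(k:ℤ)+1)).card = 2*k+1 := by
    rw [Int.card_Icc]; omega
  have himsub : S.image (fun x => |x|) ⊆ Finset.Icc (1:ℤ) (2*(k:ℤ)+1) := by
    intro a ha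
    obtain ⟨t, ht, rfl⟩ := Finset.mem_image.1 ha
    exact Finset.mem_Icc.2 (hbd t ht)
  have himcard : (S.image (fun x => |x|)).card = m := by
    rw [Finset.card_image_of_injOn (fun a ha b hb h => habs a ha b hb h)]
  have hBcard : Babs.card = 2*k+1 - m := by
    rw [hBabs, Finset.card_sdiff_of_subset himsub, himcard, hIcc]
  have hBslen : Bs.length = 2*k+1 - m := by rw [hBs, Finset.length_sort, hBcard]
  set sv : ℕ → ℤ := fun j => T.getD j 0 with hsv
  set bv : ℕ → ℤ := fun j => Bs.getD j 0 with hbv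
  have hsvget : ∀ j (h : j < m), sv j = T[j]'(by omega) := by
    intro j h; rw [hsv]; exact List.getD_eq_getElem _ _ (by omega)
  have hbvget : ∀ j (h : j < 2*k+1-m), bv j = Bs[j]'(by omega) := by
    intro j h; rw [hbv]; exact List.getD_eq_getElem _ _ (by omega)
  have hsv_mem : ∀ j, j < m → sv j ∈ S := by
    intro j h
    rw [hsvget j h]
    exact (Finset.mem_sort _).1 (List.getElem_mem _)
  have hbv_mem : ∀ j, j < 2*k+1-m → bv j ∈ Babs := by
    intro j h
    rw [hbvget j h]
    exact (Finset.mem_sort _).1 (List.getElem_mem _)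
  have hbv_bd : ∀ j, j < 2*k+1-m → 1 ≤ bv j ∧ bv j ≤ 2*(k:ℤ)+1 := by
    intro j h
    have := hbv_mem j h
    rw [hBabs, Finset.mem_sdiff] at this
    exact Finset.mem_Icc.1 this.1
  have hbv_nimg : ∀ j, j < 2*k+1-m → bv j ∉ S.image (fun x => |x|) := by
    intro j h
    have := hbv_mem j h
    rw [hBabs, Finset.mem_sdiff] at this
    exact this.2
  have hsv_mono : ∀ j j', j < j' → j' < m → sv j < sv j' := by
    intro j j' hjj hj'
    rw [hsvget j (by omega), hsvget j' hj']
    exact List.SortedLT.strictMono_get (Finset.sortedLT_sort S)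
      (show (⟨j, by omega⟩ : Fin _) < ⟨j', by omega⟩ from Fin.mk_lt_mk.mpr hjj)
  have hbv_mono : ∀ j j', j < j' → j' < 2*k+1-m → bv j < bv j' := by
    intro j j' hjj hj'
    rw [hbvget j (by omega), hbvget j' hj']
    exact List.SortedLT.strictMono_get (Finset.sortedLT_sort Babs)
      (show (⟨j, by omega⟩ : Fin _) < ⟨j', by omega⟩ from Fin.mk_lt_mk.mpr hjj)
  have hsv_bd : ∀ j, j < m → 1 ≤ |sv j| ∧ |sv j| ≤ 2*(k:ℤ)+1 := fun j h => hbd _ (hsv_mem j h)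
  have hsv_rank : ∀ j, j < m → (S.filter (· ≤ sv j)).card = j + 1 := by
    intro j h
    rw [filter_card_eq_countP]
    exact countP_le_sorted T (Finset.sortedLT_sort S).pairwise j (by omega) (sv j) (hsvget j h)
  have hkey : ∀ j, j < m → -(bv (2*k - m - 1 - j)) < sv j := by
    intro j hj
    rcases lt_trichotomy (sv j) 0 with h | h | h
    · have hc := hcnt (sv j) (hsv_mem j hj) h
      rw [hsv_rank j hj] at hc
      have := sorted_getD_gt Babs (-(sv j)) (j+2) (2*k - m - 1 - j)
        (by omega) (by omega) (by omega)
      have h5 : -sv j < bv (2*k - m - 1 - j) := this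
      linarith
    · have := hsv_bd j hj; rw [h] at this; simp at this
    · have := (hbv_bd (2*k - m - 1 - j) (by omega)).1
      linarith
  have hkey' : ∀ j, j < m → -(bv (2*k - m - j)) < sv j := by
    intro j hj
    have h1 := hbv_mono (2*k - m - 1 - j) (2*k - m - j) (by omega) (by omega)
    have := hkey j hj
    linarith
  have hbidx_lt : ∀ i, i ≤ 2*k → bidxD k m i < 2*k+1-m := by
    intro i hi; unfold bidxD; split <;> omega
  have main : ∀ fl : Bool,
      IsSignedPerm (2*k+1) (fun i : Fin (2*k+1) => FD k S fl i.val) ∧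
      PinSet (2*k+1) (fun i : Fin (2*k+1) => FD k S fl i.val) = ↑S ∧
      (Finset.univ.filter fun i : Fin (2*k+1) => FD k S fl i.val < 0).card
        = (S.filter (· < 0)).card + (2*k+1 - m) - (if fl then 1 else 0) := by
    intro fl
    set F : ℕ → ℤ := FD k S fl with hF
    have e1 : ∀ i, i % 2 = 1 → i < 2*m → F i = sv (i/2) := by
      intro i h1 h2
      rw [hF]
      simp only [FD]
      rw [if_pos (⟨h1, by omega⟩ : i % 2 = 1 ∧ i < 2*S.card)]
    have e2 : ∀ i, ¬(i % 2 = 1 ∧ i < 2*m) → ¬(fl = true ∧ i = 2*k) →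
        F i = -(bv (bidxD k m i)) := by
      intro i h1 h2
      rw [hF]
      simp only [FD]
      rw [if_neg (fun hcon : i % 2 = 1 ∧ i < 2*S.card => h1 ⟨hcon.1, by omega⟩), if_neg h2]
    have e3 : F (2*k) = if fl then bv 0 else -(bv 0) := by
      have hb : bidxD k m (2*k) = 0 := by unfold bidxD; split <;> omega
      rw [hF]
      simp only [FD]
      rw [if_neg (fun hcon : (2*k) % 2 = 1 ∧ (2*k) < 2*S.card => by omega)]
      cases fl
      · rw [if_neg (by simp), if_neg (by simp), ← hmdef, hb]
      · rw [if_pos (by simp), if_pos (by simp)]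
    have eabs : ∀ i, i ≤ 2*k → ¬(i % 2 = 1 ∧ i < 2*m) → |F i| = bv (bidxD k m i) := by
      intro i hi h1
      have hbpos := (hbv_bd (bidxD k m i) (hbidx_lt i hi)).1
      by_cases hik : i = 2*k
      · subst hik
        have hb : bidxD k m (2*k) = 0 := by unfold bidxD; split <;> omega
        rw [hb] at hbpos ⊢
        rw [e3]
        cases fl
        · rw [if_neg (by simp), abs_neg, abs_of_nonneg (by linarith)]
        · rw [if_pos rfl, abs_of_nonneg (by linarith)]
      · rw [e2 i h1 (fun hcon => hik hcon.2), abs_neg, abs_of_nonneg (by linarith)]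
    have growth : ∀ i, ¬(i % 2 = 1 ∧ i < 2*m) → i + 1 ≤ 2*k → F i < F (i+1) := by
      intro i h1 h2
      have hFi : F i = -(bv (bidxD k m i)) := e2 i h1 (fun hcon => by omega)
      by_cases hlt : i < 2*m
      · have hie : i % 2 = 0 := by
          rcases Nat.mod_two_eq_zero_or_one i with h|h
          · exact h
          · exact absurd ⟨h, hlt⟩ h1
        have hFo : F (i+1) = sv ((i+1)/2) := e1 (i+1) (by omega) (by omega)
        have hdiv : (i+1)/2 = i/2 := by omega
        have hbid : bidxD k m i = 2*k - m - i/2 := by unfold bidxD; rw [if_pos hlt]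
        rw [hFi, hFo, hdiv, hbid]
        exact hkey' (i/2) (by omega)
      · have hbid : bidxD k m i = 2*k - i := by unfold bidxD; rw [if_neg hlt]
        by_cases hfl : fl = true ∧ i + 1 = 2*k
        · have hFo : F (i+1) = bv 0 := by
            rw [hfl.2, e3, if_pos hfl.1]
          rw [hFi, hFo, hbid]
          have b1 := (hbv_bd (2*k-i) (by omega)).1
          have b2 := (hbv_bd 0 (by omega)).1
          linarith
        · have hFo : F (i+1) = -(bv (bidxD k m (i+1))) := by
            apply e2
            · intro hcon; omega
            · exact hfl
          have hbid2 : bidxD k m (i+1) = 2*k - i - 1 := by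
            unfold bidxD
            rw [if_neg (by omega)]
            omega
          rw [hFi, hFo, hbid, hbid2]
          have := hbv_mono (2*k-i-1) (2*k-i) (by omega) (by omega)
          linarith
    have hPS : PinSet (2*k+1) (fun i : Fin (2*k+1) => F i.val) = ↑S := by
      ext x
      rw [mem_PinSet_iff (W := fun i => F i) (fun i h => rfl) x]
      constructor
      · rintro ⟨i, h0, h2, hFx, hl, hr⟩
        by_cases hP1 : i % 2 = 1 ∧ i < 2*m
        · rw [← hFx, e1 i hP1.1 hP1.2]
          exact Finset.mem_coe.2 (hsv_mem _ (by omega))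
        · have := growth i hP1 (by omega)
          exfalso; linarith
      · intro hx
        have hxS : x ∈ S := hx
        have hxT : x ∈ T := (Finset.mem_sort _).2 hxS
        obtain ⟨j, hj, hxe⟩ := List.mem_iff_getElem.1 hxT
        have hjm : j < m := by omega
        have hsvx : sv j = x := by rw [hsvget j hjm]; exact hxe
        have hd : (2*j+1)/2 = j := by omega
        refine ⟨2*j+1, by omega, by omega, ?_, ?_, ?_⟩
        · rw [e1 (2*j+1) (by omega) (by omega), hd, hsvx]
        · have hrw : 2*j+1-1 = 2*j := by omega
          have hb : bidxD k m (2*j) = 2*k - m - j := by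
            unfold bidxD
            rw [if_pos (by omega)]
            omega
          rw [hrw, e1 (2*j+1) (by omega) (by omega), hd,
            e2 (2*j) (fun hcon => by omega) (fun hcon => by omega), hb]
          exact hkey' j hjm
        · have hb : bidxD k m (2*j+1+1) = 2*k - m - 1 - j := by
            unfold bidxD
            split <;> omega
          rw [e1 (2*j+1) (by omega) (by omega), hd,
            e2 (2*j+1+1) (fun hcon => by omega) (fun hcon => by omega), hb]
          exact hkey j hjm
    have hSP : IsSignedPerm (2*k+1) (fun i : Fin (2*k+1) => F i.val) := by
      constructor
      · intro i
        have hilt := i.isLt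
        by_cases hP1 : i.val % 2 = 1 ∧ i.val < 2*m
        · show 1 ≤ |F i.val| ∧ |F i.val| ≤ ((2*k+1 : ℕ) : ℤ)
          rw [e1 i.val hP1.1 hP1.2]
          have := hsv_bd (i.val/2) (by omega)
          constructor
          · exact this.1
          · push_cast; linarith [this.2]
        · show 1 ≤ |F i.val| ∧ |F i.val| ≤ ((2*k+1 : ℕ) : ℤ)
          rw [eabs i.val (by omega) hP1]
          have := hbv_bd (bidxD k m i.val) (hbidx_lt _ (by omega))
          constructor
          · exact this.1
          · push_cast; linarith [this.2]
      · intro i i' h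
        have h' : |F i.val| = |F i'.val| := h
        have hilt := i.isLt
        have hilt' := i'.isLt
        apply Fin.ext
        by_cases hP1 : i.val % 2 = 1 ∧ i.val < 2*m <;>
          by_cases hP1' : i'.val % 2 = 1 ∧ i'.val < 2*m
        · rw [e1 _ hP1.1 hP1.2, e1 _ hP1'.1 hP1'.2] at h'
          have hmem1 := hsv_mem (i.val/2) (by omega)
          have hmem2 := hsv_mem (i'.val/2) (by omega)
          have heq := habs _ hmem1 _ hmem2 h'
          have hdd : i.val/2 = i'.val/2 := by
            by_contra hne
            rcases Nat.lt_or_ge (i.val/2) (i'.val/2) with hlt | hge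
            · exact absurd heq (ne_of_lt (hsv_mono _ _ hlt (by omega)))
            · exact absurd heq.symm (ne_of_lt (hsv_mono _ _ (by omega) (by omega)))
          omega
        · exfalso
          rw [e1 _ hP1.1 hP1.2, eabs i'.val (by omega) hP1'] at h'
          apply hbv_nimg (bidxD k m i'.val) (hbidx_lt _ (by omega))
          rw [← h']
          exact Finset.mem_image_of_mem _ (hsv_mem _ (by omega))
        · exfalso
          rw [e1 _ hP1'.1 hP1'.2, eabs i.val (by omega) hP1] at h'
          apply hbv_nimg (bidxD k m i.val) (hbidx_lt _ (by omega))
          rw [h']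
          exact Finset.mem_image_of_mem _ (hsv_mem _ (by omega))
        · rw [eabs i.val (by omega) hP1, eabs i'.val (by omega) hP1'] at h'
          have hdd : bidxD k m i.val = bidxD k m i'.val := by
            by_contra hne
            rcases Nat.lt_or_ge (bidxD k m i.val) (bidxD k m i'.val) with hlt | hge
            · exact absurd h' (ne_of_lt (hbv_mono _ _ hlt (hbidx_lt _ (by omega))))
            · exact absurd h'.symm (ne_of_lt (hbv_mono _ _ (by omega) (hbidx_lt _ (by omega))))
          have hie : i.val % 2 = 0 ∨ 2*m ≤ i.val := by
            rcases Nat.mod_two_eq_zero_or_one i.val with h|h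
            · exact Or.inl h
            · exact Or.inr (by by_contra hc; exact hP1 ⟨h, by omega⟩)
          have hie' : i'.val % 2 = 0 ∨ 2*m ≤ i'.val := by
            rcases Nat.mod_two_eq_zero_or_one i'.val with h|h
            · exact Or.inl h
            · exact Or.inr (by by_contra hc; exact hP1' ⟨h, by omega⟩)
          unfold bidxD at hdd
          split_ifs at hdd <;> omega
    have hcount : (Finset.univ.filter fun i : Fin (2*k+1) => F i.val < 0).card
        = (S.filter (· < 0)).card + (2*k+1 - m) - (if fl then 1 else 0) := by
      set P1 : Fin (2*k+1) → Prop := fun i => i.val % 2 = 1 ∧ i.val < 2*m with hP1def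
      set N := Finset.univ.filter (fun i : Fin (2*k+1) => F i.val < 0) with hN
      have hsplit := Finset.card_filter_add_card_filter_not (s := N) (p := P1)
      have hN1 : (N.filter P1).card = (S.filter (· < 0)).card := by
        apply Finset.card_bij (fun i _ => sv (i.val/2))
        · intro i hi
          obtain ⟨hiN, hiP⟩ := Finset.mem_filter.1 hi
          obtain ⟨-, hineg⟩ := Finset.mem_filter.1 hiN
          have hip1 : i.val % 2 = 1 := hiP.1
          have hip2 : i.val < 2*m := hiP.2
          refine Finset.mem_filter.2 ⟨hsv_mem _ (by omega), ?_⟩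
          show sv (i.val/2) < 0
          rw [← e1 i.val hip1 hip2]
          exact hineg
        · intro i hi i' hi' heq
          obtain ⟨-, hiP⟩ := Finset.mem_filter.1 hi
          obtain ⟨-, hiP'⟩ := Finset.mem_filter.1 hi'
          have hip1 : i.val % 2 = 1 := hiP.1
          have hip2 : i.val < 2*m := hiP.2
          have hip1' : i'.val % 2 = 1 := hiP'.1
          have hip2' : i'.val < 2*m := hiP'.2
          have hdd : i.val/2 = i'.val/2 := by
            by_contra hne
            rcases Nat.lt_or_ge (i.val/2) (i'.val/2) with hlt | hge
            · exact absurd heq (ne_of_lt (hsv_mono _ _ hlt (by omega)))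
            · exact absurd heq.symm (ne_of_lt (hsv_mono _ _ (by omega) (by omega)))
          exact Fin.ext (by omega)
        · intro t ht
          obtain ⟨htS, htneg⟩ := Finset.mem_filter.1 ht
          have hxT : t ∈ T := (Finset.mem_sort _).2 htS
          obtain ⟨j, hj, hxe⟩ := List.mem_iff_getElem.1 hxT
          have hjm : j < m := by omega
          have hsvx : sv j = t := by rw [hsvget j hjm]; exact hxe
          have hd : (2*j+1)/2 = j := by omega
          have hP1j : P1 ⟨2*j+1, by omega⟩ :=
            show (2*j+1) % 2 = 1 ∧ 2*j+1 < 2*m from ⟨by omega, by omega⟩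
          refine ⟨⟨2*j+1, by omega⟩, Finset.mem_filter.2 ⟨Finset.mem_filter.2
            ⟨Finset.mem_univ _, ?_⟩, hP1j⟩, ?_⟩
          · show F (2*j+1) < 0
            rw [e1 (2*j+1) (by omega) (by omega), hd, hsvx]
            exact htneg
          · show sv ((2*j+1)/2) = t
            rw [hd, hsvx]
      have huniv1 : (Finset.univ.filter P1).card = m := by
        show _ = S.card
        apply Finset.card_bij (fun i _ => sv (i.val/2))
        · intro i hi
          have hiP : P1 i := (Finset.mem_filter.1 hi).2
          have hip2 : i.val < 2*m := hiP.2
          exact hsv_mem _ (by omega)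
        · intro i hi i' hi' heq
          have hiP : P1 i := (Finset.mem_filter.1 hi).2
          have hiP' : P1 i' := (Finset.mem_filter.1 hi').2
          have hip1 : i.val % 2 = 1 := hiP.1
          have hip2 : i.val < 2*m := hiP.2
          have hip1' : i'.val % 2 = 1 := hiP'.1
          have hip2' : i'.val < 2*m := hiP'.2
          have hdd : i.val/2 = i'.val/2 := by
            by_contra hne
            rcases Nat.lt_or_ge (i.val/2) (i'.val/2) with hlt | hge
            · exact absurd heq (ne_of_lt (hsv_mono _ _ hlt (by omega)))
            · exact absurd heq.symm (ne_of_lt (hsv_mono _ _ (by omega) (by omega)))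
          exact Fin.ext (by omega)
        · intro t ht
          have hxT : t ∈ T := (Finset.mem_sort _).2 ht
          obtain ⟨j, hj, hxe⟩ := List.mem_iff_getElem.1 hxT
          have hjm : j < m := by omega
          have hsvx : sv j = t := by rw [hsvget j hjm]; exact hxe
          have hd : (2*j+1)/2 = j := by omega
          have hP1j : P1 ⟨2*j+1, by omega⟩ :=
            show (2*j+1) % 2 = 1 ∧ 2*j+1 < 2*m from ⟨by omega, by omega⟩
          refine ⟨⟨2*j+1, by omega⟩, Finset.mem_filter.2 ⟨Finset.mem_univ _, hP1j⟩, ?_⟩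
          show sv ((2*j+1)/2) = t
          rw [hd, hsvx]
      have hcompl := Finset.card_filter_add_card_filter_not
        (s := (Finset.univ : Finset (Fin (2*k+1)))) (p := P1)
      have hcardu : (Finset.univ : Finset (Fin (2*k+1))).card = 2*k+1 := by simp
      cases fl with
      | false =>
        have hNP : N.filter (fun i => ¬ P1 i) = Finset.univ.filter (fun i => ¬ P1 i) := by
          ext i
          constructor
          · intro hi
            obtain ⟨hiN, hiP⟩ := Finset.mem_filter.1 hi
            exact Finset.mem_filter.2 ⟨Finset.mem_univ _, hiP⟩
          · intro hi
            obtain ⟨-, hiP⟩ := Finset.mem_filter.1 hi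
            refine Finset.mem_filter.2 ⟨Finset.mem_filter.2 ⟨Finset.mem_univ _, ?_⟩, hiP⟩
            show F i.val < 0
            have hilt := i.isLt
            rw [e2 i.val hiP (fun hcon => Bool.false_ne_true hcon.1)]
            have := (hbv_bd (bidxD k m i.val) (hbidx_lt _ (by omega))).1
            linarith
        rw [if_neg Bool.false_ne_true]
        have hcards : (N.filter (fun i => ¬ P1 i)).card
            = (Finset.univ.filter (fun i => ¬ P1 i)).card := by rw [hNP]
        omega
      | true =>
        have h2kmem : (⟨2*k, by omega⟩ : Fin (2*k+1)) ∈ Finset.univ.filter (fun i => ¬ P1 i) := by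
          refine Finset.mem_filter.2 ⟨Finset.mem_univ _, ?_⟩
          show ¬((2*k) % 2 = 1 ∧ 2*k < 2*m)
          omega
        have hNP : N.filter (fun i => ¬ P1 i)
            = (Finset.univ.filter (fun i => ¬ P1 i)).erase ⟨2*k, by omega⟩ := by
          ext i
          constructor
          · intro hi
            obtain ⟨hiN, hiP⟩ := Finset.mem_filter.1 hi
            obtain ⟨-, hineg⟩ := Finset.mem_filter.1 hiN
            refine Finset.mem_erase.2 ⟨?_, Finset.mem_filter.2 ⟨Finset.mem_univ _, hiP⟩⟩
            intro hcon
            rw [hcon] at hineg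
            have hlt0 : F (2*k) < 0 := hineg
            rw [e3, if_pos rfl] at hlt0
            have := (hbv_bd 0 (by omega)).1
            linarith
          · intro hi
            obtain ⟨hne, hiu⟩ := Finset.mem_erase.1 hi
            obtain ⟨-, hiP⟩ := Finset.mem_filter.1 hiu
            refine Finset.mem_filter.2 ⟨Finset.mem_filter.2 ⟨Finset.mem_univ _, ?_⟩, hiP⟩
            show F i.val < 0
            have hilt := i.isLt
            rw [e2 i.val hiP (fun hcon => hne (Fin.ext hcon.2))]
            have := (hbv_bd (bidxD k m i.val) (hbidx_lt _ (by omega))).1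
            linarith
        have hKcard : ((Finset.univ.filter (fun i => ¬ P1 i)).erase
            (⟨2*k, by omega⟩ : Fin (2*k+1))).card
            = (Finset.univ.filter (fun i => ¬ P1 i)).card - 1 :=
          Finset.card_erase_of_mem h2kmem
        rw [if_pos rfl]
        have hcards : (N.filter (fun i => ¬ P1 i)).card
            = (Finset.univ.filter (fun i => ¬ P1 i)).card - 1 := by rw [hNP]; exact hKcard
        omega
    exact ⟨hSP, hPS, hcount⟩
  rcases Nat.even_or_odd ((S.filter (· < 0)).card + (2*k+1-m)) with hE | hO
  · obtain ⟨hsp, hps, hc⟩ := main false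
    refine ⟨_, hsp, ?_, hps⟩
    rw [hc]
    simpa using hE
  · obtain ⟨hsp, hps, hc⟩ := main true
    refine ⟨_, hsp, ?_, hps⟩
    rw [hc]
    simp only [if_pos rfl]
    exact Nat.Odd.sub_odd hO odd_one

theorem stmt11 (k : ℕ) (S : Finset ℤ) (h1 : APSB (2 * k + 1) S)
    (h2 : ¬ APSD (2 * k + 1) S) : S.card = k := by
  obtain ⟨w, hw, hpin⟩ := h1
  have hval : ∀ s ∈ S, ∃ i : Fin (2*k+1), w i = s := by
    intro s hs
    have hsp : s ∈ PinSet (2*k+1) w := by rw [hpin]; exact hs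
    obtain ⟨i, h0, h2', he, -, -⟩ := hsp
    exact ⟨⟨i, by omega⟩, he⟩
  have habs : ∀ s ∈ S, ∀ t ∈ S, |s| = |t| → s = t := by
    intro s hs t ht h
    obtain ⟨i, rfl⟩ := hval s hs
    obtain ⟨i', rfl⟩ := hval t ht
    rw [hw.2 (show (fun i => |w i|) i = (fun i => |w i|) i' from h)]
  have hcast : ((2*k+1 : ℕ) : ℤ) = 2*(k:ℤ)+1 := by push_cast; ring
  have hbd : ∀ s ∈ S, 1 ≤ |s| ∧ |s| ≤ (2*(k:ℤ)+1) := by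
    intro s hs
    obtain ⟨i, rfl⟩ := hval s hs
    have h3 := hw.1 i
    rw [hcast] at h3
    exact h3
  have hcard : S.card ≤ k := witness_card_le hw hpin rfl
  rcases eq_or_lt_of_le hcard with he | hlt
  · exact he
  · exfalso
    apply h2
    apply buildD k S hlt habs hbd
    intro s hs hneg
    have h4 := witness_counting hw hpin hs hneg
    rw [hcast] at h4
    exact h4
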